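/- Let k be a field of characteristic 0 and let B be a commutative k-algebra that is an integral domain. Let t_1, …, t_s ∈ B be such that every element of B is algebraic over the k-subalgebra of B generated by t_1, …, t_s, and suppose D_1, …, D_s are k-linear derivations of B with D_i(t_j) = δ_{ij} (Kronecker delta) for all i, j. Then: (a) every k-linear derivation d of B satisfies d = Σ_{i=1}^{s} d(t_i)·D_i (a B-linear combination of derivations); and (b) if b_1, …, b_s ∈ B satisfy Σ_{i=1}^{s} b_i·D_i = 0, then b_1 = ⋯ = b_s = 0. Hence D_1, …, D_s form a basis of the B-module of k-linear derivations of B. -/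

import Mathlib

set_option synthInstance.maxHeartbeats 1000000
set_option maxHeartbeats 1000000

open Polynomial in
/-- A derivation vanishing on `t i` for all `i` vanishes identically, provided every element
of `B` is algebraic over the subalgebra generated by the `t i`. -/
lemma derivation_eq_zero_of_chart_parameters
    (k B : Type*) [Field k] [CharZero k] [CommRing B] [IsDomain B] [Algebra k B]
    (s : ℕ) (t : Fin s → B)
    (halg : ∀ b : B, IsAlgebraic (Algebra.adjoin k (Set.range t)) b)
    (d : Derivation k B B) (hd : ∀ i, d (t i) = 0) : d = 0 := by
  haveI : CharZero B := charZero_of_injective_algebraMap (algebraMap k B).injective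
  set S := Algebra.adjoin k (Set.range t) with hS
  -- `d` vanishes on `S`.
  have hdS : ∀ a : S, d (algebraMap S B a) = 0 := by
    intro a
    have h0 : Set.EqOn d (0 : Derivation k B B) (Set.range t) := by
      rintro x ⟨i, rfl⟩
      simpa using hd i
    have := Derivation.eqOn_adjoin (R := k) h0 (a.2 : (a : B) ∈ S)
    simpa using this
  ext b
  simp only [Derivation.zero_apply]
  obtain ⟨p, hp0, hpb⟩ := halg b
  -- strong induction on the degree of an annihilating polynomial
  have key : ∀ n : ℕ, ∀ p : S[X], p.natDegree ≤ n → p ≠ 0 → aeval b p = 0 → d b = 0 := by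
    intro n
    induction n with
    | zero =>
      intro p hdeg hp0 hpb
      exfalso
      rw [Polynomial.eq_C_of_natDegree_eq_zero (Nat.le_zero.mp hdeg)] at hpb hp0
      rw [aeval_C] at hpb
      have : (p.coeff 0 : B) = 0 := by simpa using hpb
      exact hp0 (by rw [show p.coeff 0 = 0 from Subtype.ext this]; simp)
    | succ n ih =>
      intro p hdeg hp0 hpb
      have hmc : PolynomialModule.eval b (((d.compAlgebraMap S).mapCoeffs p).map B LinearMap.id) = 0 := by
        have : (d.compAlgebraMap S).mapCoeffs p = 0 := by
          apply PolynomialModule.ext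
          apply Finsupp.ext
          intro i
          show d (algebraMap S B (p.coeff i)) = _
          simp [hdS]
          exact hdS _
        rw [this, map_zero, map_zero]
      have happ := Derivation.apply_aeval_eq (d := d) b p
      rw [hpb, map_zero, hmc, zero_add, smul_eq_mul] at happ
      rcases mul_eq_zero.mp happ.symm with h | h
      · -- `p' (b) = 0`: recurse with `p'`, which is nonzero of smaller degree
        have hp'0 : derivative p ≠ 0 := by
          intro hzero
          have := (Polynomial.natDegree_eq_zero_of_derivative_eq_zero hzero)
          rw [Polynomial.eq_C_of_natDegree_eq_zero this] at hpb hp0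
          rw [aeval_C] at hpb
          have : (p.coeff 0 : B) = 0 := by simpa using hpb
          exact hp0 (by rw [show p.coeff 0 = 0 from Subtype.ext this]; simp)
        have hlt : (derivative p).natDegree ≤ n := by
          have h1 : (derivative p).natDegree < p.natDegree := by
            apply Polynomial.natDegree_derivative_lt
            intro hc
            exact hp'0 (by rw [Polynomial.eq_C_of_natDegree_eq_zero hc]; simp)
          omega
        exact ih (derivative p) hlt hp'0 h
      · exact h
  exact key p.natDegree p le_rfl hp0 hpb

theorem derivations_free_basis_of_chart_parameters
    (k B : Type*) [Field k] [CharZero k] [CommRing B] [IsDomain B] [Algebra k B]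
    (s : ℕ) (t : Fin s → B)
    (halg : ∀ b : B, IsAlgebraic (Algebra.adjoin k (Set.range t)) b)
    (D : Fin s → Derivation k B B)
    (hD : ∀ i j, D i (t j) = if i = j then 1 else 0) :
    (∀ d : Derivation k B B, d = ∑ i, d (t i) • D i) ∧
    (∀ b : Fin s → B, ∑ i, b i • D i = 0 → ∀ i, b i = 0) := by
  have sum_apply : ∀ (f : Fin s → Derivation k B B) (x : B),
      (∑ i, f i) x = ∑ i, f i x := by
    intro f x
    exact map_sum (⟨⟨fun e : Derivation k B B => e x, rfl⟩, fun a b => rfl⟩ :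
      Derivation k B B →+ B) f Finset.univ
  constructor
  · intro d
    have h0 : ∀ j, (d - ∑ i, d (t i) • D i) (t j) = 0 := by
      intro j
      rw [Derivation.sub_apply, sum_apply]
      simp only [Derivation.smul_apply, hD, smul_eq_mul, mul_ite, mul_one, mul_zero]
      simp [Finset.sum_ite_eq]
    have := derivation_eq_zero_of_chart_parameters k B s t halg _ h0
    rwa [sub_eq_zero] at this
  · intro b h j
    have := congrArg (fun e : Derivation k B B => e (t j)) h
    simp only [sum_apply, Derivation.smul_apply, hD, smul_eq_mul, mul_ite, mul_one,
      mul_zero, Derivation.zero_apply] at this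
    simpa [Finset.sum_ite_eq] using this
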